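/- Let B be a Boolean algebra, f an automorphism of B, k₀,…,kₙ integers, and a ∈ B such that f^{k₀}(a), …, f^{kₙ}(a) are pairwise disjoint. Then for all automorphisms h₁,…,hₙ of B commuting with f, and every nonzero b ≤ a, the join h₁(a) ∨ ⋯ ∨ hₙ(a) is not ≥ f^{k₀}(b) ∨ ⋯ ∨ f^{kₙ}(b). -/

import Mathlib

/-- If `f^{k₀} a, …, f^{kₙ} a` are pairwise disjoint, then for automorphisms `h₁, …, hₙ`
commuting with `f` and any nonzero `b ≤ a`,
`h₁ a ⊔ ⋯ ⊔ hₙ a` is not above `f^{k₀} b ⊔ ⋯ ⊔ f^{kₙ} b`. -/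
theorem stmt9 {B : Type*} [BooleanAlgebra B] {n : ℕ} (f : B ≃o B)
    (k : Fin (n + 1) → ℤ) (a : B)
    (hdisj : ∀ i j, i ≠ j → (f ^ k i) a ⊓ (f ^ k j) a = ⊥)
    (h : Fin n → B ≃o B) (hcomm : ∀ i, h i * f = f * h i)
    (b : B) (hb : b ≠ ⊥) (hba : b ≤ a) :
    ¬ Finset.univ.sup (fun j => (f ^ k j) b) ≤ Finset.univ.sup (fun i => h i a) := by
  intro H
  -- basic facts about order isos
  have mapbot : ∀ (g : B ≃o B) (x : B), g x = ⊥ → x = ⊥ := by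
    intro g x hx
    have : g x = g ⊥ := by rw [hx, OrderIso.map_bot]
    exact g.injective this
  have mapinf : ∀ (g : B ≃o B) (x y : B), g (x ⊓ y) = g x ⊓ g y := fun g x y =>
    OrderIso.map_inf g x y
  -- shrinking lemma
  have key : ∀ s : Finset (Fin (n + 1)), ∃ c : B, c ≠ ⊥ ∧ c ≤ b ∧
      ∀ j ∈ s, ∃ i, (f ^ k j) c ≤ h i a := by
    intro s
    induction s using Finset.induction_on with
    | empty => exact ⟨b, hb, le_rfl, fun j hj => absurd hj (Finset.notMem_empty j)⟩
    | @insert j s hjs ih =>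
      obtain ⟨c, hc0, hcb, hσ⟩ := ih
      have hle : (f ^ k j) c ≤ Finset.univ.sup (fun i => h i a) := by
        have h2 : (f ^ k j) b ≤ Finset.univ.sup (fun j' => (f ^ k j') b) :=
          Finset.le_sup (f := fun j' => (f ^ k j') b) (Finset.mem_univ j)
        exact le_trans ((f ^ k j).monotone hcb) (le_trans h2 H)
      have hex : ∃ i, (f ^ k j) c ⊓ h i a ≠ ⊥ := by
        by_contra hall
        push_neg at hall
        have : (f ^ k j) c = ⊥ := by
          have h1 : (f ^ k j) c = (f ^ k j) c ⊓ Finset.univ.sup (fun i => h i a) :=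
            (inf_eq_left.mpr hle).symm
          rw [Finset.sup_inf_distrib_left] at h1
          rw [h1]
          exact (Finset.sup_eq_bot_iff _ _).mpr (fun i _ => hall i)
        exact hc0 (mapbot _ _ this)
      obtain ⟨i, hi⟩ := hex
      refine ⟨c ⊓ (f ^ k j).symm (h i a), ?_, le_trans inf_le_left hcb, ?_⟩
      · intro hbot
        apply hi
        have : (f ^ k j) (c ⊓ (f ^ k j).symm (h i a)) = ⊥ := by
          rw [hbot, OrderIso.map_bot]
        rwa [mapinf, OrderIso.apply_symm_apply] at this
      · intro j' hj'
        rcases Finset.mem_insert.mp hj' with rfl | hj's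
        · refine ⟨i, ?_⟩
          rw [mapinf, OrderIso.apply_symm_apply]
          exact inf_le_right
        · obtain ⟨i', hi'⟩ := hσ j' hj's
          exact ⟨i', le_trans ((f ^ k j').monotone inf_le_left) hi'⟩
  obtain ⟨c, hc0, hcb, hσ⟩ := key Finset.univ
  -- choose the assignment
  choose σ hσ' using fun j => hσ j (Finset.mem_univ j)
  -- pigeonhole
  obtain ⟨j, j', hjj', hσeq⟩ : ∃ j j', j ≠ j' ∧ σ j = σ j' := by
    have hcard : Fintype.card (Fin n) < Fintype.card (Fin (n + 1)) := by simp
    obtain ⟨j, j', hne, heq⟩ := Fintype.exists_ne_map_eq_of_card_lt σ hcard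
    exact ⟨j, j', hne, heq⟩
  set i := σ j with hi_def
  -- commutation of (h i)⁻¹ with powers of f
  have hcommz : ∀ (m : ℤ), (h i)⁻¹ * f ^ m = f ^ m * (h i)⁻¹ := by
    intro m
    have : Commute (h i) f := hcomm i
    exact ((this.inv_left).zpow_right m).eq
  have happ : ∀ (m : ℤ) (x : B), (h i)⁻¹ ((f ^ m) x) = (f ^ m) ((h i)⁻¹ x) := by
    intro m x
    have := congrArg (fun g : B ≃o B => g x) (hcommz m)
    exact this
  set d := (h i)⁻¹ c with hd_def
  have hd0 : d ≠ ⊥ := by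
    intro hd
    apply hc0
    have hcd : c = (h i) d := ((h i).apply_symm_apply c).symm
    rw [hcd, hd, OrderIso.map_bot]
  have hdj : (f ^ k j) d ≤ a := by
    rw [hd_def, ← happ]
    have := ((h i)⁻¹).monotone (hσ' j)
    calc (h i)⁻¹ ((f ^ k j) c) ≤ (h i)⁻¹ ((h i) a) := this
      _ = a := (h i).symm_apply_apply a
  have hdj' : (f ^ k j') d ≤ a := by
    rw [hd_def, ← happ]
    have h1 : (f ^ k j') c ≤ h (σ j') a := hσ' j'
    rw [← hσeq] at h1
    have := ((h i)⁻¹).monotone h1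
    calc (h i)⁻¹ ((f ^ k j') c) ≤ (h i)⁻¹ ((h i) a) := this
      _ = a := (h i).symm_apply_apply a
  -- derive the contradiction from disjointness
  have hfd : (f ^ k j) d ≤ (f ^ (k j - k j')) a := by
    have : (f ^ (k j - k j')) ((f ^ k j') d) = (f ^ k j) d := by
      have h1 : f ^ (k j - k j') * f ^ k j' = f ^ k j := by
        rw [← zpow_add, sub_add_cancel]
      exact congrArg (fun g : B ≃o B => g d) h1
    rw [← this]
    exact ((f ^ (k j - k j')) : B ≃o B).monotone hdj'
  have hdisj' : (f ^ (k j - k j')) a ⊓ a = ⊥ := by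
    have h0 := hdisj j j' hjj'
    have h1 := congrArg (f ^ (-(k j'))) h0
    rw [mapinf, OrderIso.map_bot] at h1
    have h2 : (f ^ (-(k j'))) ((f ^ k j) a) = (f ^ (k j - k j')) a := by
      have : f ^ (-(k j')) * f ^ k j = f ^ (k j - k j') := by
        rw [← zpow_add]; ring_nf
      exact congrArg (fun g : B ≃o B => g a) this
    have h3 : (f ^ (-(k j'))) ((f ^ k j') a) = a := by
      have : f ^ (-(k j')) * f ^ k j' = 1 := by
        rw [← zpow_add]; simp
      exact congrArg (fun g : B ≃o B => g a) this
    rw [h2, h3] at h1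
    exact h1
  have : (f ^ k j) d ≤ ⊥ := by
    rw [← hdisj']
    exact le_inf hfd hdj
  exact hd0 (mapbot _ _ (le_bot_iff.mp this))
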